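/- For fixed 0 < a < 1, lim_{α→0⁺} (α a^α/(1 - a^α + a^α log a^α)) · (v^α - 1)/v = 2 log v / (v (log a)²) for every v ∈ [1, 1/a], and lim_{α→0⁺} of the OU-CTS compound Poisson intensity c β^α Γ(1-α)(1 - a^α + a^α log a^α)/(T b α² a^α) equals c (log a)²/(2 T b). -/

import Mathlib

open Real Filter

private lemma expD (L : ℝ) :
    Tendsto (fun α : ℝ => (1 - Real.exp (L * α) + Real.exp (L * α) * (α * L)) / α ^ 2)
      (nhdsWithin 0 (Set.Ioi 0)) (nhds (L ^ 2 / 2)) := by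
  apply HasDerivAt.lhopital_zero_nhdsGT
    (f' := fun α : ℝ => α * L ^ 2 * Real.exp (L * α)) (g' := fun α : ℝ => 2 * α)
  · filter_upwards with α
    have hexp : HasDerivAt (fun α : ℝ => Real.exp (L * α)) (Real.exp (L * α) * L) α := by
      simpa [mul_comm, Function.comp_def] using (Real.hasDerivAt_exp (L * α)).comp α
        ((hasDerivAt_id α).const_mul L)
    have h2 : HasDerivAt (fun α : ℝ => Real.exp (L * α) * (α * L))
        (Real.exp (L * α) * L * (α * L) + Real.exp (L * α) * L) α := by
      simpa [Pi.mul_def] using hexp.mul ((hasDerivAt_id α).mul_const L)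
    have := ((hasDerivAt_const α (1 : ℝ)).sub hexp).add h2
    exact this.congr_deriv (by ring)
  · filter_upwards with α
    simpa using (hasDerivAt_pow 2 α)
  · filter_upwards [self_mem_nhdsWithin] with α (hα : (0:ℝ) < α)
    positivity
  · have hC : ContinuousAt (fun α : ℝ => 1 - Real.exp (L * α) + Real.exp (L * α) * (α * L)) 0 := by
      fun_prop
    have h : Tendsto (fun α : ℝ => 1 - Real.exp (L * α) + Real.exp (L * α) * (α * L))
        (nhdsWithin 0 (Set.Ioi 0)) (nhds (1 - Real.exp (L * 0) + Real.exp (L * 0) * (0 * L))) :=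
      hC.tendsto.mono_left nhdsWithin_le_nhds
    simpa using h
  · have hC : ContinuousAt (fun α : ℝ => α ^ 2) 0 := by fun_prop
    have h : Tendsto (fun α : ℝ => α ^ 2) (nhdsWithin 0 (Set.Ioi 0)) (nhds ((0:ℝ) ^ 2)) :=
      hC.tendsto.mono_left nhdsWithin_le_nhds
    simpa using h
  · have heq : ∀ α ∈ Set.Ioi (0:ℝ),
        L ^ 2 * Real.exp (L * α) / 2 = α * L ^ 2 * Real.exp (L * α) / (2 * α) := by
      intro α hα
      have hα0 : α ≠ 0 := ne_of_gt hα
      field_simp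
    have hC : ContinuousAt (fun α : ℝ => L ^ 2 * Real.exp (L * α) / 2) 0 := by fun_prop
    have h : Tendsto (fun α : ℝ => L ^ 2 * Real.exp (L * α) / 2)
        (nhdsWithin 0 (Set.Ioi 0)) (nhds (L ^ 2 * Real.exp (L * 0) / 2)) :=
      hC.tendsto.mono_left nhdsWithin_le_nhds
    have h' := h.congr' (eventuallyEq_of_mem self_mem_nhdsWithin heq)
    simpa using h'

private lemma rpowD (a : ℝ) (ha0 : 0 < a) :
    Tendsto (fun α : ℝ => (1 - a ^ α + a ^ α * Real.log (a ^ α)) / α ^ 2)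
      (nhdsWithin 0 (Set.Ioi 0)) (nhds ((Real.log a) ^ 2 / 2)) := by
  have h := expD (Real.log a)
  apply h.congr
  intro α
  rw [Real.log_rpow ha0, Real.rpow_def_of_pos ha0]

private lemma rpow_tendsto_one (a : ℝ) (ha0 : 0 < a) :
    Tendsto (fun α : ℝ => a ^ α) (nhdsWithin 0 (Set.Ioi 0)) (nhds 1) := by
  have hC : ContinuousAt (fun α : ℝ => a ^ α) 0 :=
    Real.continuousAt_const_rpow (ne_of_gt ha0)
  have h : Tendsto (fun α : ℝ => a ^ α) (nhdsWithin 0 (Set.Ioi 0)) (nhds (a ^ (0:ℝ))) :=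
    hC.tendsto.mono_left nhdsWithin_le_nhds
  simpa using h

private lemma slope_rpow (v : ℝ) (hv : 0 < v) :
    Tendsto (fun α : ℝ => (v ^ α - 1) / α) (nhdsWithin 0 (Set.Ioi 0)) (nhds (Real.log v)) := by
  have hd : HasDerivAt (fun α : ℝ => v ^ α) (Real.log v) 0 := by
    have h := (Real.hasDerivAt_exp (Real.log v * 0)).comp 0
      ((hasDerivAt_id 0).const_mul (Real.log v))
    have h2 : HasDerivAt (fun α : ℝ => Real.exp (Real.log v * α)) (Real.log v) 0 := by
      exact h.congr_deriv (by simp)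
    have heq : (fun α : ℝ => Real.exp (Real.log v * α)) = fun α : ℝ => v ^ α := by
      funext α; rw [Real.rpow_def_of_pos hv]
    rwa [heq] at h2
  have h := hasDerivAt_iff_tendsto_slope.mp hd
  have h2 := h.mono_left (nhdsWithin_mono 0 (fun x hx => by
    simp only [Set.mem_compl_iff, Set.mem_singleton_iff]
    exact ne_of_gt hx))
  apply h2.congr
  intro α
  simp [slope_def_field]

theorem stmt_10 (a c β T b : ℝ) (ha0 : 0 < a) (ha1 : a < 1)
    (hc : 0 < c) (hβ : 0 < β) (hT : 0 < T) (hb : 0 < b) :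
    (∀ v ∈ Set.Icc (1:ℝ) (1/a),
        Tendsto (fun α : ℝ =>
            α * a ^ α / (1 - a ^ α + a ^ α * Real.log (a ^ α)) * ((v ^ α - 1) / v))
          (nhdsWithin 0 (Set.Ioi 0))
          (nhds (2 * Real.log v / (v * (Real.log a) ^ 2)))) ∧
    Tendsto (fun α : ℝ =>
        c * β ^ α * Real.Gamma (1 - α) * (1 - a ^ α + a ^ α * Real.log (a ^ α))
          / (T * b * α ^ 2 * a ^ α))
      (nhdsWithin 0 (Set.Ioi 0))
      (nhds (c * (Real.log a) ^ 2 / (2 * T * b))) := by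
  have hL : Real.log a ≠ 0 := ne_of_lt (Real.log_neg ha0 ha1)
  have hL2 : (Real.log a) ^ 2 / 2 ≠ 0 := by positivity
  have hinv : Tendsto (fun α : ℝ => α ^ 2 / (1 - a ^ α + a ^ α * Real.log (a ^ α)))
      (nhdsWithin 0 (Set.Ioi 0)) (nhds (((Real.log a) ^ 2 / 2)⁻¹)) := by
    have h := (rpowD a ha0).inv₀ hL2
    apply h.congr
    intro α
    rw [inv_div]
  constructor
  · intro v hv
    have hv0 : (0:ℝ) < v := lt_of_lt_of_le one_pos hv.1
    have hprod := ((rpow_tendsto_one a ha0).mul hinv).mul ((slope_rpow v hv0).div_const v)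
    have heq : ∀ α ∈ Set.Ioi (0:ℝ),
        a ^ α * (α ^ 2 / (1 - a ^ α + a ^ α * Real.log (a ^ α))) * ((v ^ α - 1) / α / v)
        = α * a ^ α / (1 - a ^ α + a ^ α * Real.log (a ^ α)) * ((v ^ α - 1) / v) := by
      intro α hα
      have hα0 : α ≠ 0 := ne_of_gt hα
      set D := 1 - a ^ α + a ^ α * Real.log (a ^ α) with hD
      rcases eq_or_ne D 0 with h | h
      · simp [h]
      · field_simp
    have h := hprod.congr' (eventuallyEq_of_mem self_mem_nhdsWithin heq)
    have hval : 1 * ((Real.log a) ^ 2 / 2)⁻¹ * (Real.log v / v)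
        = 2 * Real.log v / (v * (Real.log a) ^ 2) := by
      rw [one_mul, inv_div, div_mul_div_comm, mul_comm ((Real.log a) ^ 2) v]
    rwa [hval] at h
  · have hβt : Tendsto (fun α : ℝ => β ^ α) (nhdsWithin 0 (Set.Ioi 0)) (nhds 1) :=
      rpow_tendsto_one β hβ
    have hΓ : Tendsto (fun α : ℝ => Real.Gamma (1 - α)) (nhdsWithin 0 (Set.Ioi 0)) (nhds 1) := by
      have hc1 : ContinuousAt Real.Gamma 1 := by
        refine (Real.differentiableAt_Gamma fun m => ?_).continuousAt
        intro h
        have hm : (0:ℝ) ≤ (m : ℝ) := Nat.cast_nonneg m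
        linarith
      have hsub : ContinuousAt (fun α : ℝ => 1 - α) 0 := by fun_prop
      have hc1' : ContinuousAt Real.Gamma ((1:ℝ) - 0) := by norm_num; exact hc1
      have hC : ContinuousAt (fun α : ℝ => Real.Gamma (1 - α)) 0 := hc1'.comp hsub
      have h : Tendsto (fun α : ℝ => Real.Gamma (1 - α)) (nhdsWithin 0 (Set.Ioi 0))
          (nhds (Real.Gamma (1 - 0))) := hC.tendsto.mono_left nhdsWithin_le_nhds
      simpa [Real.Gamma_one] using h
    have h1 : Tendsto (fun α : ℝ => 1 / (a ^ α)) (nhdsWithin 0 (Set.Ioi 0)) (nhds 1) := by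
      have h := (rpow_tendsto_one a ha0).inv₀ one_ne_zero
      simpa [one_div] using h
    have hprod := (((hβt.const_mul c).mul hΓ).mul ((rpowD a ha0).mul h1)).div_const (T * b)
    have heq : ∀ α ∈ Set.Ioi (0:ℝ),
        c * β ^ α * Real.Gamma (1 - α)
            * ((1 - a ^ α + a ^ α * Real.log (a ^ α)) / α ^ 2 * (1 / a ^ α)) / (T * b)
        = c * β ^ α * Real.Gamma (1 - α) * (1 - a ^ α + a ^ α * Real.log (a ^ α))
          / (T * b * α ^ 2 * a ^ α) := by
      intro α hα
      rw [div_mul_div_comm, mul_one, ← mul_div_assoc, div_div]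
      congr 1
      ring
    have h := hprod.congr' (eventuallyEq_of_mem self_mem_nhdsWithin heq)
    have hval : c * 1 * 1 * ((Real.log a) ^ 2 / 2 * 1) / (T * b)
        = c * (Real.log a) ^ 2 / (2 * T * b) := by
      field_simp
    rwa [hval] at h
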